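/- If K ⊆ ℝ^d is Capra-convex, then K is a cone, K ∪ {0} is closed, and K ∩ {0} = cl conv(ρ(K)) ∩ {0} (i.e., 0 ∈ K if and only if 0 ∈ cl conv(ρ(K))). -/

import Mathlib

open Classical in
noncomputable def radProj {d : ℕ} (N : EuclideanSpace ℝ (Fin d) → ℝ)
    (x : EuclideanSpace ℝ (Fin d)) : EuclideanSpace ℝ (Fin d) :=
  if x = 0 then 0 else (N x)⁻¹ • x

noncomputable def capraConj {d : ℕ} (N : EuclideanSpace ℝ (Fin d) → ℝ)
    (f : EuclideanSpace ℝ (Fin d) → EReal) (y : EuclideanSpace ℝ (Fin d)) : EReal :=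
  ⨆ x : EuclideanSpace ℝ (Fin d), ((inner ℝ (radProj N x) y : ℝ) : EReal) - f x

noncomputable def capraBiconj {d : ℕ} (N : EuclideanSpace ℝ (Fin d) → ℝ)
    (f : EuclideanSpace ℝ (Fin d) → EReal) (x : EuclideanSpace ℝ (Fin d)) : EReal :=
  ⨆ y : EuclideanSpace ℝ (Fin d), ((inner ℝ (radProj N x) y : ℝ) : EReal) - capraConj N f y

open Classical in
noncomputable def ind {d : ℕ} (X : Set (EuclideanSpace ℝ (Fin d)))
    (x : EuclideanSpace ℝ (Fin d)) : EReal :=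
  if x ∈ X then 0 else ⊤

def IsCapraConvex {d : ℕ} (N : EuclideanSpace ℝ (Fin d) → ℝ)
    (X : Set (EuclideanSpace ℝ (Fin d))) : Prop :=
  ind X = capraBiconj N (ind X)

def coneHull {d : ℕ} (A : Set (EuclideanSpace ℝ (Fin d))) : Set (EuclideanSpace ℝ (Fin d)) :=
  {y | ∃ a ∈ A, ∃ l : ℝ, 0 < l ∧ y = l • a}

/-! ### Auxiliary lemmas -/

lemma ereal_sub_nonpos {a : ℝ} {b : EReal} (h : (a : EReal) ≤ b) : (a : EReal) - b ≤ 0 := by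
  induction b using EReal.rec with
  | bot => simp at h
  | coe b =>
      rw [← EReal.coe_sub]
      exact_mod_cast sub_nonpos.2 (by exact_mod_cast h)
  | top => simp [EReal.sub_top]

/-- Claim A: membership in a Capra-convex set is characterized by domination of the
linear coupling by the Capra-conjugate. -/
lemma capra_claimA {d : ℕ} (N : EuclideanSpace ℝ (Fin d) → ℝ)
    (K : Set (EuclideanSpace ℝ (Fin d))) (hK : IsCapraConvex N K)
    (z : EuclideanSpace ℝ (Fin d)) :
    z ∈ K ↔ ∀ y, ((inner ℝ (radProj N z) y : ℝ) : EReal) ≤ capraConj N (ind K) y := by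
  constructor
  · intro hz y
    have h := le_iSup (fun x => ((inner ℝ (radProj N x) y : ℝ) : EReal) - ind K x) z
    simpa [ind, hz, capraConj] using h
  · intro h
    by_contra hz
    have h1 : ind K z = ⊤ := by simp [ind, hz]
    have h2 : capraBiconj N (ind K) z ≤ 0 := by
      apply iSup_le
      intro y
      exact ereal_sub_nonpos (h y)
    rw [hK] at h1
    rw [h1] at h2
    exact absurd h2 (by simp)

/-- The key characterization: a Capra-convex set consists exactly of the points whose
radial projection lies in the closed convex hull of the radial projection of the set. -/
lemma capra_mem_iff {d : ℕ} (N : EuclideanSpace ℝ (Fin d) → ℝ)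
    (K : Set (EuclideanSpace ℝ (Fin d))) (hK : IsCapraConvex N K)
    (x : EuclideanSpace ℝ (Fin d)) :
    x ∈ K ↔ radProj N x ∈ closure (convexHull ℝ (radProj N '' K)) := by
  set A := radProj N '' K with hA
  set C := closure (convexHull ℝ A) with hC
  have hAC : A ⊆ C := (subset_convexHull ℝ A).trans subset_closure
  constructor
  · intro hx
    by_contra hρ
    obtain ⟨f, u, hfu, hfb⟩ :=
      geometric_hahn_banach_point_closed ((convex_convexHull ℝ A).closure) isClosed_closure hρ
    set v : EuclideanSpace ℝ (Fin d) := (InnerProductSpace.toDual ℝ _).symm f with hv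
    have hvf : ∀ w : EuclideanSpace ℝ (Fin d), (inner ℝ w v : ℝ) = f w := by
      intro w
      rw [real_inner_comm]
      exact InnerProductSpace.toDual_symm_apply
    -- bound the conjugate at y := -v
    have hg : capraConj N (ind K) (-v) ≤ ((-u : ℝ) : EReal) := by
      apply iSup_le
      intro z
      by_cases hz : z ∈ K
      · have hzA : radProj N z ∈ C := hAC ⟨z, hz, rfl⟩
        have h1 : u < f (radProj N z) := hfb _ hzA
        have h2 : (inner ℝ (radProj N z) (-v) : ℝ) ≤ -u := by
          rw [inner_neg_right, hvf]
          linarith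
        simp only [ind, hz, if_pos, sub_zero]
        exact_mod_cast h2
      · simp [ind, hz, EReal.sub_top]
    have h3 := (capra_claimA N K hK x).1 hx (-v)
    have h4 : (inner ℝ (radProj N x) (-v) : ℝ) ≤ -u := by
      exact_mod_cast h3.trans hg
    rw [inner_neg_right, hvf] at h4
    linarith
  · intro hρ
    rw [capra_claimA N K hK]
    intro y
    set g : EReal := capraConj N (ind K) y with hgdef
    have hAg : ∀ a ∈ A, ((inner ℝ a y : ℝ) : EReal) ≤ g := by
      rintro a ⟨z, hz, rfl⟩
      have h := le_iSup (fun x => ((inner ℝ (radProj N x) y : ℝ) : EReal) - ind K x) z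
      simpa [ind, hz, capraConj, hgdef] using h
    by_cases htop : g = ⊤
    · rw [htop]; exact le_top
    -- A is nonempty since C is
    have hAne : A.Nonempty := by
      by_contra hne
      rw [Set.not_nonempty_iff_eq_empty] at hne
      have hCe : C = ∅ := by rw [hC, hne]; simp
      rw [hCe] at hρ
      exact hρ
    obtain ⟨a0, ha0⟩ := hAne
    have hbot : g ≠ ⊥ := by
      intro hb
      have := hAg a0 ha0
      rw [hb] at this
      exact absurd this (by simp)
    set M : ℝ := g.toReal with hM
    have hgM : g = (M : EReal) := (EReal.coe_toReal htop hbot).symm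
    have hAg' : ∀ a ∈ A, (inner ℝ a y : ℝ) ≤ M := by
      intro a ha
      have := hAg a ha
      rw [hgM] at this
      exact_mod_cast this
    -- the halfspace
    set S : Set (EuclideanSpace ℝ (Fin d)) := {z | (inner ℝ y z : ℝ) ≤ M} with hS
    have hSconv : Convex ℝ S := by
      apply convex_halfSpace_le
      exact ⟨fun a b => by rw [inner_add_right], fun c a => by
        rw [real_inner_smul_right, smul_eq_mul]⟩
    have hSclosed : IsClosed S := by
      have : Continuous fun z : EuclideanSpace ℝ (Fin d) => (inner ℝ y z : ℝ) :=
        continuous_const.inner continuous_id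
      exact isClosed_le this continuous_const
    have hAS : A ⊆ S := by
      intro a ha
      show (inner ℝ y a : ℝ) ≤ M
      rw [real_inner_comm]
      exact hAg' a ha
    have hCS : C ⊆ S := closure_minimal (convexHull_min hAS hSconv) hSclosed
    have : (inner ℝ y (radProj N x) : ℝ) ≤ M := hCS hρ
    rw [real_inner_comm] at this
    rw [hgM]
    exact_mod_cast this

theorem stmt {d : ℕ} (N : EuclideanSpace ℝ (Fin d) → ℝ)
    (hN0 : ∀ x : EuclideanSpace ℝ (Fin d), N x = 0 ↔ x = 0)
    (hNh : ∀ (a : ℝ) (x : EuclideanSpace ℝ (Fin d)), N (a • x) = |a| * N x)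
    (hNt : ∀ x y : EuclideanSpace ℝ (Fin d), N (x + y) ≤ N x + N y)
    (K : Set (EuclideanSpace ℝ (Fin d))) (hK : IsCapraConvex N K) :
    (∀ l : ℝ, 0 < l → ∀ x ∈ K, l • x ∈ K) ∧
    IsClosed (K ∪ {0}) ∧
    ((0 : EuclideanSpace ℝ (Fin d)) ∈ K ↔ (0 : EuclideanSpace ℝ (Fin d)) ∈ closure (convexHull ℝ (radProj N '' K))) := by
  have hmem := capra_mem_iff N K hK
  have hρ0 : radProj N (0 : EuclideanSpace ℝ (Fin d)) = 0 := by simp [radProj]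
  -- radProj is invariant under positive scaling
  have hρscale : ∀ (l : ℝ), 0 < l → ∀ x, radProj N (l • x) = radProj N x := by
    intro l hl x
    by_cases hx0 : x = 0
    · simp [hx0, radProj]
    · have hlx : l • x ≠ 0 := smul_ne_zero (ne_of_gt hl) hx0
      have hNx : N x ≠ 0 := fun h => hx0 ((hN0 x).1 h)
      simp only [radProj, if_neg hlx, if_neg hx0, hNh, abs_of_pos hl, smul_smul]
      congr 1
      field_simp
  refine ⟨?_, ?_, ?_⟩
  · -- cone
    intro l hl x hx
    rw [hmem] at hx ⊢
    rwa [hρscale l hl]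
  · -- closedness
    -- N is nonnegative
    have hN0' : N 0 = 0 := (hN0 0).2 rfl
    have hneg : ∀ z, N (-z) = N z := fun z => by
      have := hNh (-1) z; simpa using this
    have hNnonneg : ∀ z, 0 ≤ N z := by
      intro z
      have h1 : N (z + (-z)) ≤ N z + N (-z) := hNt z (-z)
      rw [add_neg_cancel, hN0', hneg] at h1
      linarith
    -- N is Lipschitz, hence continuous
    set c : ℝ := ∑ i : Fin d, N (EuclideanSpace.single i (1:ℝ)) with hc
    have hcnn : 0 ≤ c := Finset.sum_nonneg fun i _ => hNnonneg _
    have hbound : ∀ z : EuclideanSpace ℝ (Fin d), N z ≤ c * ‖z‖ := by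
      intro z
      have hdecomp : z = ∑ i, z i • EuclideanSpace.single i (1:ℝ) := by
        ext j
        rw [WithLp.ofLp_sum, Finset.sum_apply]
        simp [EuclideanSpace.single_apply]
      have h1 : N z ≤ ∑ i, N (z i • EuclideanSpace.single i (1:ℝ)) := by
        conv_lhs => rw [hdecomp]
        exact Finset.le_sum_of_subadditive N hN0'.le hNt _ _
      have h2 : ∀ i : Fin d, N (z i • EuclideanSpace.single i (1:ℝ))
          ≤ ‖z‖ * N (EuclideanSpace.single i (1:ℝ)) := by
        intro i
        rw [hNh]
        apply mul_le_mul_of_nonneg_right _ (hNnonneg _)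
        -- |z i| ≤ ‖z‖
        have hi : (inner ℝ (EuclideanSpace.single i (1:ℝ)) z : ℝ) = z i := by
          simp [EuclideanSpace.inner_single_left]
        have habs := abs_real_inner_le_norm (EuclideanSpace.single i (1:ℝ)) z
        rw [hi, EuclideanSpace.norm_single] at habs
        simpa using habs
      calc N z ≤ ∑ i, N (z i • EuclideanSpace.single i (1:ℝ)) := h1
        _ ≤ ∑ i, ‖z‖ * N (EuclideanSpace.single i (1:ℝ)) := Finset.sum_le_sum fun i _ => h2 i
        _ = c * ‖z‖ := by rw [← Finset.mul_sum, mul_comm]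
    have hlip : ∀ a b : EuclideanSpace ℝ (Fin d), |N a - N b| ≤ c * ‖a - b‖ := by
      intro a b
      have h1 : N a ≤ N (a - b) + N b := by
        have := hNt (a - b) b; simpa using this
      have h2 : N b ≤ N (a - b) + N a := by
        have := hNt (b - a) a
        rw [sub_add_cancel] at this
        have hn : N (b - a) = N (a - b) := by rw [← hneg (a-b), neg_sub]
        linarith
      have h3 : |N a - N b| ≤ N (a - b) := abs_sub_le_iff.2 ⟨by linarith, by linarith⟩
      exact h3.trans (hbound _)
    have hNcont : Continuous N := by
      apply LipschitzWith.continuous (K := ⟨c, hcnn⟩)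
      apply LipschitzWith.of_dist_le_mul
      intro a b
      rw [Real.dist_eq, dist_eq_norm]
      exact hlip a b
    -- conclude closedness
    apply isClosed_of_closure_subset
    intro x hx
    rw [closure_union, closure_singleton] at hx
    by_cases hx0 : x = 0
    · right; simp [hx0]
    · have hxK : x ∈ closure K := by
        cases hx with
        | inl h => exact h
        | inr h => exact absurd h hx0
      left
      have hNx : N x ≠ 0 := fun h => hx0 ((hN0 x).1 h)
      have hρcont : ContinuousAt (radProj N) x := by
        have hcc : ContinuousAt (fun z : EuclideanSpace ℝ (Fin d) => (N z)⁻¹ • z) x :=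
          ((hNcont.continuousAt.inv₀ hNx).smul continuousAt_id)
        apply hcc.congr
        have hne : ∀ᶠ z in nhds x, z ≠ 0 := by
          exact eventually_ne_nhds hx0
        filter_upwards [hne] with z hz
        simp [radProj, hz]
      have h1 : radProj N x ∈ closure (radProj N '' K) :=
        mem_closure_image hρcont hxK
      have h2 : closure (radProj N '' K) ⊆ closure (convexHull ℝ (radProj N '' K)) :=
        closure_mono (subset_convexHull ℝ _)
      rw [hmem]
      exact h2 h1
  · -- zero membership
    rw [hmem 0, hρ0]
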